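/- Let S ⊆ (Fin n → ℝ) be finite and nonempty, P = convexHull ℝ S, and a, E : Fin n → ℝ. Let α_min be the minimum of p ↦ a·p over P (which exists since P is compact and nonempty). Then there exists an extreme point V of P with a·V = α_min and E·V ≤ E·p for every p ∈ P with a·p = α_min; i.e. there is a cost-optimal vertex of P attaining the minimal target value. -/

import Mathlib

noncomputable def dotCLM {n : ℕ} (a : Fin n → ℝ) : (Fin n → ℝ) →L[ℝ] ℝ :=
  ∑ i, (a i) • (ContinuousLinearMap.proj i)

lemma dotCLM_apply {n : ℕ} (a p : Fin n → ℝ) : dotCLM a p = ∑ i, a i * p i := by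
  simp [dotCLM, ContinuousLinearMap.sum_apply]

/-- A (nonempty) polytope has a cost-optimal vertex attaining the minimal target
value `α_min`: an extreme point `V` with `a·V = α_min` and `E·V ≤ E·p` for every `p ∈ P` with
`a·p = α_min`. -/
theorem stmt_18 (n : ℕ) (S : Set (Fin n → ℝ)) (hSf : S.Finite) (hSn : S.Nonempty)
    (P : Set (Fin n → ℝ)) (hP : P = convexHull ℝ S)
    (a E : Fin n → ℝ)
    (αmin : ℝ) (hα : IsLeast ((fun p => ∑ i, a i * p i) '' P) αmin) :
    ∃ V ∈ Set.extremePoints ℝ P, (∑ i, a i * V i) = αmin ∧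
      ∀ p ∈ P, (∑ i, a i * p i) = αmin → (∑ i, E i * V i) ≤ ∑ i, E i * p i := by
  classical
  have hPcomp : IsCompact P := hP ▸ hSf.isCompact_convexHull (𝕜 := ℝ)
  set la : (Fin n → ℝ) →L[ℝ] ℝ := dotCLM a with hla
  set lE : (Fin n → ℝ) →L[ℝ] ℝ := dotCLM E with hlE
  set Q : Set (Fin n → ℝ) := {p ∈ P | la p = αmin} with hQdef
  have hQne : Q.Nonempty := by
    obtain ⟨x, hxP, hx⟩ := hα.1
    exact ⟨x, hxP, by rw [dotCLM_apply]; exact hx⟩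
  have hQexp : IsExposed ℝ P Q := by
    intro _
    refine ⟨-la, ?_⟩
    ext x
    simp only [hQdef, Set.mem_setOf_eq, ContinuousLinearMap.neg_apply, neg_le_neg_iff]
    constructor
    · rintro ⟨hxP, hx⟩
      exact ⟨hxP, fun y hyP => by
        rw [hx, dotCLM_apply]; exact hα.2 ⟨y, hyP, rfl⟩⟩
    · rintro ⟨hxP, hx⟩
      refine ⟨hxP, le_antisymm ?_ ?_⟩
      · obtain ⟨z, hzP, hz⟩ := hα.1
        calc la x ≤ la z := hx z hzP
          _ = αmin := by rw [dotCLM_apply]; exact hz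
      · rw [dotCLM_apply]; exact hα.2 ⟨x, hxP, rfl⟩
  have hQcomp : IsCompact Q := by
    have : Q = P ∩ la ⁻¹' {αmin} := by ext x; simp [hQdef]
    rw [this]
    exact hPcomp.inter_right ((isClosed_singleton).preimage la.continuous)
  -- minimizers of lE over Q
  set R : Set (Fin n → ℝ) := {p ∈ Q | ∀ q ∈ Q, lE p ≤ lE q} with hRdef
  have hRne : R.Nonempty := by
    obtain ⟨x, hxQ, hx⟩ := hQcomp.exists_isMinOn hQne lE.continuous.continuousOn
    exact ⟨x, hxQ, fun q hq => hx hq⟩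
  have hRexp : IsExposed ℝ Q R := by
    intro _
    refine ⟨-lE, ?_⟩
    ext x
    simp only [hRdef, Set.mem_setOf_eq, ContinuousLinearMap.neg_apply, neg_le_neg_iff]
  have hRcomp : IsCompact R := hRexp.isCompact hQcomp
  obtain ⟨V, hV⟩ := hRcomp.extremePoints_nonempty hRne
  have hext : IsExtreme ℝ P R := hQexp.isExtreme.trans hRexp.isExtreme
  have hVP : V ∈ Set.extremePoints ℝ P := hext.extremePoints_subset_extremePoints hV
  have hVR : V ∈ R := hV.1
  refine ⟨V, hVP, ?_, ?_⟩
  · have := hVR.1.2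
    rwa [dotCLM_apply] at this
  · intro p hpP hpa
    have hpQ : p ∈ Q := ⟨hpP, by rw [dotCLM_apply]; exact hpa⟩
    have := hVR.2 p hpQ
    rwa [dotCLM_apply, dotCLM_apply] at this
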